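/- Stage-2 residual Z error (Lemma 3): Let H ∈ 𝔽₂^{m×n} and A ∈ 𝔽₂^{a×n} with H·Aᵀ = 0, and assume H is (t,f)-confined relative to A with f : ℕ → ℝ monotone increasing. Let T ≥ 1 and let e¹,…,e^T ∈ 𝔽₂ⁿ and s_e¹,…,s_e^T ∈ 𝔽₂^m satisfy ‖e^τ‖_A ≤ t/4 and f(2|s_e^τ|) ≤ t/4 for every τ. Define ē¹ = e¹ and, for τ = 1,…,T: let ŝ^τ ∈ 𝔽₂^m be any vector of minimum Hamming weight among those for which there exists e′ ∈ 𝔽₂ⁿ with ‖e′‖_A ≤ t/2 and He′ = Hē^τ + s_e^τ + ŝ^τ; let ê^τ ∈ 𝔽₂ⁿ be any vector of minimum Hamming weight with Hê^τ = Hē^τ + s_e^τ + ŝ^τ; and for τ < T set ē^{τ+1} = e^{τ+1} + ē^τ + ê^τ. Then the final residual error satisfies ‖ē^T + ê^T‖_A ≤ t/4. -/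

import Mathlib

open Matrix Kronecker

/-- The row space of a matrix over 𝔽₂: the span of its rows. -/
def rowSpace {m n : Type*} (A : Matrix m n (ZMod 2)) :
    Submodule (ZMod 2) (n → ZMod 2) :=
  Submodule.span (ZMod 2) (Set.range A)

/-- The reduced weight of a vector `v` relative to a matrix `A`:
`‖v‖_A = min { |v+u| : u ∈ rs(A) }`. -/
noncomputable def redW {m n : Type*} [Fintype n] (A : Matrix m n (ZMod 2))
    (v : n → ZMod 2) : ℕ :=
  sInf {k | ∃ u ∈ rowSpace A, hammingNorm (v + u) = k}

/-- `H` is `(t,f)`-sound relative to `A`. -/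
def Sound {m n a : Type*} [Fintype m] [Fintype n] (t : ℕ) (f : ℕ → ℝ)
    (H : Matrix m n (ZMod 2)) (A : Matrix a n (ZMod 2)) : Prop :=
  ∀ s : m → ZMod 2, (∃ e, H.mulVec e = s) → hammingNorm s ≤ t →
    ∃ e, H.mulVec e = s ∧ (redW A e : ℝ) ≤ f (hammingNorm s)

/-- `H` is `(t,f)`-confined relative to `A`. -/
def Confined {m n a : Type*} [Fintype m] [Fintype n] (t : ℕ) (f : ℕ → ℝ)
    (H : Matrix m n (ZMod 2)) (A : Matrix a n (ZMod 2)) : Prop :=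
  ∀ e : n → ZMod 2, redW A e ≤ t → (redW A e : ℝ) ≤ f (hammingNorm (H.mulVec e))

/-- Parity-check matrix of the length-`ℓ` repetition code. -/
def repH (ℓ : ℕ) : Matrix (Fin (ℓ - 1)) (Fin ℓ) (ZMod 2) :=
  Matrix.of fun j i => if i.val = j.val ∨ i.val = j.val + 1 then 1 else 0

/-- Thickened X-check matrix `H̃_X = ( H_X⊗I_ℓ | I_{m_X}⊗hᵀ )`. -/
def thickHX {mX n : ℕ} (HX : Matrix (Fin mX) (Fin n) (ZMod 2)) (ℓ : ℕ) :
    Matrix (Fin mX × Fin ℓ) ((Fin n × Fin ℓ) ⊕ (Fin mX × Fin (ℓ - 1))) (ZMod 2) :=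
  Matrix.fromCols (HX ⊗ₖ (1 : Matrix (Fin ℓ) (Fin ℓ) (ZMod 2)))
    ((1 : Matrix (Fin mX) (Fin mX) (ZMod 2)) ⊗ₖ (repH ℓ)ᵀ)

/-- Thickened Z-check matrix `H̃_Z = [[ H_Z⊗I_ℓ , 0 ],[ I_n⊗h , H_Xᵀ⊗I_{ℓ−1} ]]`. -/
def thickHZ {mX mZ n : ℕ} (HX : Matrix (Fin mX) (Fin n) (ZMod 2))
    (HZ : Matrix (Fin mZ) (Fin n) (ZMod 2)) (ℓ : ℕ) :
    Matrix ((Fin mZ × Fin ℓ) ⊕ (Fin n × Fin (ℓ - 1)))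
      ((Fin n × Fin ℓ) ⊕ (Fin mX × Fin (ℓ - 1))) (ZMod 2) :=
  Matrix.fromBlocks (HZ ⊗ₖ (1 : Matrix (Fin ℓ) (Fin ℓ) (ZMod 2))) 0
    ((1 : Matrix (Fin n) (Fin n) (ZMod 2)) ⊗ₖ repH ℓ)
    (HXᵀ ⊗ₖ (1 : Matrix (Fin (ℓ - 1)) (Fin (ℓ - 1)) (ZMod 2)))

/-- Metacheck matrix `M̃_Z = ( I_{m_Z}⊗h | H_Z⊗I_{ℓ−1} )`. -/
def metaMZ {mZ n : ℕ} (HZ : Matrix (Fin mZ) (Fin n) (ZMod 2)) (ℓ : ℕ) :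
    Matrix (Fin mZ × Fin (ℓ - 1))
      ((Fin mZ × Fin ℓ) ⊕ (Fin n × Fin (ℓ - 1))) (ZMod 2) :=
  Matrix.fromCols ((1 : Matrix (Fin mZ) (Fin mZ) (ZMod 2)) ⊗ₖ repH ℓ)
    (HZ ⊗ₖ (1 : Matrix (Fin (ℓ - 1)) (Fin (ℓ - 1)) (ZMod 2)))

/-- Sheet-`τ` component of a vector on the thickened qubit space. -/
def sheet {n ℓ mX : ℕ} (τ : Fin ℓ)
    (v : (Fin n × Fin ℓ) ⊕ (Fin mX × Fin (ℓ - 1)) → ZMod 2) : Fin n → ZMod 2 :=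
  fun i => v (Sum.inl (i, τ))


lemma hn_add_le {n : Type*} [Fintype n] (x y : n → ZMod 2) :
    hammingNorm (x + y) ≤ hammingNorm x + hammingNorm y := by
  calc hammingNorm (x + y) = hammingDist (x + y) 0 := (hammingDist_zero_right _).symm
    _ ≤ hammingDist (x + y) y + hammingDist y 0 := hammingDist_triangle _ _ _
    _ = hammingNorm x + hammingNorm y := by
        rw [hammingDist_eq_hammingNorm, hammingDist_zero_right, neg_add, neg_add_cancel_right,
          (funext fun i => ZMod.neg_eq_self_mod_two (x i) : -x = x)]

lemma redW_le {m n : Type*} [Fintype n] (A : Matrix m n (ZMod 2)) (v u : n → ZMod 2)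
    (hu : u ∈ rowSpace A) : redW A v ≤ hammingNorm (v + u) :=
  Nat.sInf_le ⟨u, hu, rfl⟩

lemma redW_le_norm {m n : Type*} [Fintype n] (A : Matrix m n (ZMod 2)) (v : n → ZMod 2) :
    redW A v ≤ hammingNorm v := by
  simpa using redW_le A v 0 (Submodule.zero_mem _)

lemma redW_exists {m n : Type*} [Fintype n] (A : Matrix m n (ZMod 2)) (v : n → ZMod 2) :
    ∃ u ∈ rowSpace A, hammingNorm (v + u) = redW A v := by
  have hne : {k | ∃ u ∈ rowSpace A, hammingNorm (v + u) = k}.Nonempty :=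
    ⟨hammingNorm v, 0, Submodule.zero_mem _, by simp⟩
  exact Nat.sInf_mem hne

lemma redW_add_le {m n : Type*} [Fintype n] (A : Matrix m n (ZMod 2)) (v w : n → ZMod 2) :
    redW A (v + w) ≤ redW A v + redW A w := by
  obtain ⟨u, hu, hun⟩ := redW_exists A v
  obtain ⟨u', hu', hun'⟩ := redW_exists A w
  calc redW A (v + w) ≤ hammingNorm (v + w + (u + u')) :=
        redW_le A _ _ (Submodule.add_mem _ hu hu')
    _ = hammingNorm ((v + u) + (w + u')) := by ring_nf
    _ ≤ hammingNorm (v + u) + hammingNorm (w + u') := hn_add_le _ _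
    _ = redW A v + redW A w := by rw [hun, hun']

lemma mulVec_rowSpace {m n a : ℕ} (H : Matrix (Fin m) (Fin n) (ZMod 2))
    (A : Matrix (Fin a) (Fin n) (ZMod 2)) (hHA : H * Aᵀ = 0)
    {u : Fin n → ZMod 2} (hu : u ∈ rowSpace A) : H.mulVec u = 0 := by
  induction hu using Submodule.span_induction with
  | mem x hx =>
      obtain ⟨j, rfl⟩ := hx
      funext i
      have := congrFun (congrFun hHA i) j
      simpa [Matrix.mul_apply, Matrix.mulVec, dotProduct, Matrix.transpose_apply] using this
  | zero => simp [Matrix.mulVec_zero]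
  | add x y _ _ hx hy => rw [Matrix.mulVec_add, hx, hy]; simp
  | smul c x _ hx => rw [Matrix.mulVec_smul, hx]; simp

lemma key_step {m n a : ℕ} (H : Matrix (Fin m) (Fin n) (ZMod 2))
    (A : Matrix (Fin a) (Fin n) (ZMod 2)) (hHA : H * Aᵀ = 0)
    (t : ℕ) (f : ℕ → ℝ) (hf : Monotone f) (hconf : Confined t f H A)
    (ebarv ehatv : Fin n → ZMod 2) (sev shatv : Fin m → ZMod 2)
    (hbar : (redW A ebarv : ℝ) ≤ (t : ℝ) / 2)
    (hsef : f (2 * hammingNorm sev) ≤ (t : ℝ) / 4)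
    (hex : ∃ e', (redW A e' : ℝ) ≤ (t : ℝ) / 2 ∧
      H.mulVec e' = H.mulVec ebarv + sev + shatv)
    (hmin : ∀ s' : Fin m → ZMod 2,
      (∃ e', (redW A e' : ℝ) ≤ (t : ℝ) / 2 ∧
        H.mulVec e' = H.mulVec ebarv + sev + s') →
      hammingNorm shatv ≤ hammingNorm s')
    (hsynd : H.mulVec ehatv = H.mulVec ebarv + sev + shatv)
    (hminE : ∀ e' : Fin n → ZMod 2,
      H.mulVec e' = H.mulVec ebarv + sev + shatv →
      hammingNorm ehatv ≤ hammingNorm e') :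
    (redW A (ebarv + ehatv) : ℝ) ≤ (t : ℝ) / 4 := by
  have hss : sev + sev = 0 := by funext i; exact CharTwo.add_self_eq_zero _
  have hshat_le : hammingNorm shatv ≤ hammingNorm sev := by
    refine hmin sev ⟨ebarv, hbar, ?_⟩
    rw [add_assoc, hss, add_zero]
  obtain ⟨e₀, he₀w, he₀s⟩ := hex
  obtain ⟨u₀, hu₀, hu₀n⟩ := redW_exists A e₀
  have hHu : H.mulVec u₀ = 0 := mulVec_rowSpace H A hHA hu₀
  have hsame : H.mulVec (e₀ + u₀) = H.mulVec ebarv + sev + shatv := by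
    rw [Matrix.mulVec_add, hHu, add_zero, he₀s]
  have hehat_le : hammingNorm ehatv ≤ redW A e₀ := hu₀n ▸ hminE _ hsame
  have h1 : (hammingNorm ehatv : ℝ) ≤ (t : ℝ) / 2 :=
    le_trans (Nat.cast_le.2 hehat_le) he₀w
  have h2' : redW A (ebarv + ehatv) ≤ t := by
    have hle := redW_add_le A ebarv ehatv
    have hle2 := redW_le_norm A ehatv
    have : (redW A (ebarv + ehatv) : ℝ) ≤ (t : ℝ) := by
      have c1 : (redW A (ebarv + ehatv) : ℝ) ≤ (redW A ebarv : ℝ) + (redW A ehatv : ℝ) := by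
        exact_mod_cast hle
      have c2 : (redW A ehatv : ℝ) ≤ (hammingNorm ehatv : ℝ) := by exact_mod_cast hle2
      linarith
    exact_mod_cast this
  have hxx : H.mulVec ebarv + H.mulVec ebarv = 0 := by
    funext i; exact CharTwo.add_self_eq_zero _
  have hsy : H.mulVec (ebarv + ehatv) = sev + shatv := by
    rw [Matrix.mulVec_add, hsynd]
    calc H.mulVec ebarv + (H.mulVec ebarv + sev + shatv)
        = (H.mulVec ebarv + H.mulVec ebarv) + (sev + shatv) := by ring
      _ = sev + shatv := by rw [hxx, zero_add]
  have hnorm : hammingNorm (H.mulVec (ebarv + ehatv)) ≤ 2 * hammingNorm sev := by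
    rw [hsy, two_mul]
    calc hammingNorm (sev + shatv) ≤ hammingNorm sev + hammingNorm shatv := hn_add_le _ _
      _ ≤ hammingNorm sev + hammingNorm sev := by omega
  calc (redW A (ebarv + ehatv) : ℝ) ≤ f (hammingNorm (H.mulVec (ebarv + ehatv))) :=
        hconf _ h2'
    _ ≤ f (2 * hammingNorm sev) := hf hnorm
    _ ≤ (t : ℝ) / 4 := hsef


theorem stage2_residual_Z_error
    {m n a : ℕ}
    (H : Matrix (Fin m) (Fin n) (ZMod 2))
    (A : Matrix (Fin a) (Fin n) (ZMod 2))
    (hHA : H * Aᵀ = 0)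
    (t : ℕ) (ht : 0 < t) (f : ℕ → ℝ) (hf : Monotone f)
    (hconf : Confined t f H A)
    (T : ℕ) (hT : 1 ≤ T)
    (e ebar ehat : ℕ → Fin n → ZMod 2) (se shat : ℕ → Fin m → ZMod 2)
    (he : ∀ τ < T, (redW A (e τ) : ℝ) ≤ (t : ℝ) / 4)
    (hse : ∀ τ < T, f (2 * hammingNorm (se τ)) ≤ (t : ℝ) / 4)
    (hebar0 : ebar 0 = e 0)
    (hshat : ∀ τ < T,
      (∃ e', (redW A e' : ℝ) ≤ (t : ℝ) / 2 ∧
        H.mulVec e' = H.mulVec (ebar τ) + se τ + shat τ) ∧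
      (∀ s' : Fin m → ZMod 2,
        (∃ e', (redW A e' : ℝ) ≤ (t : ℝ) / 2 ∧
          H.mulVec e' = H.mulVec (ebar τ) + se τ + s') →
        hammingNorm (shat τ) ≤ hammingNorm s'))
    (hehat : ∀ τ < T,
      H.mulVec (ehat τ) = H.mulVec (ebar τ) + se τ + shat τ ∧
      (∀ e' : Fin n → ZMod 2,
        H.mulVec e' = H.mulVec (ebar τ) + se τ + shat τ →
        hammingNorm (ehat τ) ≤ hammingNorm e'))
    (hrec : ∀ τ, τ + 1 < T → ebar (τ + 1) = e (τ + 1) + ebar τ + ehat τ) :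
    (redW A (ebar (T - 1) + ehat (T - 1)) : ℝ) ≤ (t : ℝ) / 4 := by
  have inv : ∀ τ, τ < T → (redW A (ebar τ) : ℝ) ≤ (t : ℝ) / 2 := by
    intro τ
    induction τ with
    | zero =>
        intro _
        rw [hebar0]
        have h0 := he 0 (by omega)
        have : (0:ℝ) ≤ (t:ℝ) := Nat.cast_nonneg t
        linarith
    | succ τ ih =>
        intro h
        have hτ : τ < T := by omega
        obtain ⟨hex, hmin⟩ := hshat τ hτ
        obtain ⟨hsynd, hminE⟩ := hehat τ hτ
        have hk := key_step H A hHA t f hf hconf (ebar τ) (ehat τ) (se τ) (shat τ)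
          (ih hτ) (hse τ hτ) hex hmin hsynd hminE
        rw [hrec τ h, add_assoc]
        have hle := redW_add_le A (e (τ + 1)) (ebar τ + ehat τ)
        have c1 : (redW A (e (τ + 1) + (ebar τ + ehat τ)) : ℝ)
            ≤ (redW A (e (τ + 1)) : ℝ) + (redW A (ebar τ + ehat τ) : ℝ) := by
          exact_mod_cast hle
        have h1 := he (τ + 1) h
        linarith
  obtain ⟨hex, hmin⟩ := hshat (T - 1) (by omega)
  obtain ⟨hsynd, hminE⟩ := hehat (T - 1) (by omega)
  exact key_step H A hHA t f hf hconf (ebar (T - 1)) (ehat (T - 1)) (se (T - 1))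
    (shat (T - 1)) (inv (T - 1) (by omega)) (hse (T - 1) (by omega)) hex hmin hsynd hminE
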